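/- Recovery of a signal from one reference coordinate: let z ∈ ℂ^m with z₁ ≠ 0. Then the vector z is determined up to a global unimodular phase by the 3m - 2 real numbers |z_ℓ| (1 ≤ ℓ ≤ m), |z₁ + z_ℓ| (2 ≤ ℓ ≤ m), and |z₁ + i z_ℓ| (2 ≤ ℓ ≤ m). That is, if w ∈ ℂ^m with w₁ ≠ 0 gives the same values of all these magnitudes, then there exists c ∈ ℂ with |c| = 1 such that w = c·z. -/

import Mathlib

open Complex

private lemma key_cross (a b a' b' : ℂ)
    (h1 : ‖a‖ = ‖a'‖)
    (h2 : ‖b‖ = ‖b'‖)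
    (h3 : ‖a + b‖ = ‖a' + b'‖)
    (h4 : ‖a + Complex.I * b‖ = ‖a' + Complex.I * b'‖) :
    (starRingEnd ℂ) a * b = (starRingEnd ℂ) a' * b' := by
  have n1 : Complex.normSq a = Complex.normSq a' := by
    rw [← Complex.sq_norm, ← Complex.sq_norm a', h1]
  have n2 : Complex.normSq b = Complex.normSq b' := by
    rw [← Complex.sq_norm, ← Complex.sq_norm b', h2]
  have n3 : Complex.normSq (a + b) = Complex.normSq (a' + b') := by
    rw [← Complex.sq_norm, ← Complex.sq_norm, h3]
  have n4 : Complex.normSq (a + Complex.I * b) = Complex.normSq (a' + Complex.I * b') := by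
    rw [← Complex.sq_norm, ← Complex.sq_norm, h4]
  simp only [Complex.normSq_apply, Complex.add_re, Complex.add_im, Complex.mul_re,
    Complex.mul_im, Complex.I_re, Complex.I_im] at n1 n2 n3 n4
  apply Complex.ext <;>
    simp only [Complex.mul_re, Complex.mul_im, Complex.conj_re, Complex.conj_im] <;>
    (ring_nf at n1 n2 n3 n4 ⊢; linarith)

/-- Recovery of a signal up to global phase from one reference coordinate:
if z, w ∈ ℂ^m have nonzero first coordinates and agree on all magnitudes
|z_ℓ|, |z₁ + z_ℓ|, |z₁ + i z_ℓ|, then w = c·z for some unimodular c. -/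
theorem recovery_up_to_global_phase (m : ℕ) (z w : Fin (m + 1) → ℂ)
    (hz : z 0 ≠ 0) (hw : w 0 ≠ 0)
    (habs : ∀ ℓ, ‖w ℓ‖ = ‖z ℓ‖)
    (hsum : ∀ ℓ, ℓ ≠ 0 → ‖w 0 + w ℓ‖ = ‖z 0 + z ℓ‖)
    (hisum : ∀ ℓ, ℓ ≠ 0 →
      ‖w 0 + Complex.I * w ℓ‖ = ‖z 0 + Complex.I * z ℓ‖) :
    ∃ c : ℂ, ‖c‖ = 1 ∧ ∀ ℓ, w ℓ = c * z ℓ := by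
  refine ⟨w 0 / z 0, ?_, ?_⟩
  · rw [norm_div, habs 0, div_self]
    exact (norm_ne_zero_iff.mpr hz)
  · intro ℓ
    by_cases h : ℓ = 0
    · subst h; field_simp
    · have key := key_cross (w 0) (w ℓ) (z 0) (z ℓ) (habs 0) (habs ℓ)
        (hsum ℓ h) (hisum ℓ h)
      have hns : (starRingEnd ℂ) (w 0) * w 0 = (starRingEnd ℂ) (z 0) * z 0 := by
        rw [mul_comm, Complex.mul_conj, mul_comm, Complex.mul_conj, ← Complex.sq_norm,
          ← Complex.sq_norm, habs 0]
      have hc0 : (starRingEnd ℂ) (w 0) ≠ 0 := by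
        simpa using hw
      field_simp
      apply mul_right_cancel₀ (show (starRingEnd ℂ) (z 0) ≠ 0 by simpa using hz)
      have := congrArg (fun x => w 0 * x) key
      beta_reduce at this
      rw [← mul_assoc, ← mul_assoc, mul_comm (w 0), hns] at this
      calc w ℓ * z 0 * ((starRingEnd ℂ) (z 0))
          = (starRingEnd ℂ) (z 0) * z 0 * w ℓ := by ring
        _ = (starRingEnd ℂ) (w 0) * w 0 * w ℓ := by rw [hns]
        _ = w 0 * ((starRingEnd ℂ) (w 0) * w ℓ) := by ring
        _ = w 0 * ((starRingEnd ℂ) (z 0) * z ℓ) := by rw [key]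
        _ = w 0 * z ℓ * ((starRingEnd ℂ) (z 0)) := by ring
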